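/- (Dissipation hierarchy, Eq. 7a) Let T > 0, L₂₂ > 0, X₂ ≠ 0 and let q satisfy 2√2/3 < q < 1. Then the reduced dissipation function Φ(x) = T·L₂₂·X₂²·(x² + 2qx + 1), evaluated at the six optimal force ratios, satisfies the strict chain Φ(x_mdf) < Φ(x_Mη) < Φ(x_MEF) < Φ(x_MΩ) < Φ(x_MPη) < Φ(x_MPO). -/
import Mathlib


/-- Optimal force ratio for minimum dissipation function: `x_mdf = −q`. -/
noncomputable def xmdf (q : ℝ) : ℝ := -q

/-- Optimal force ratio for maximum power output: `x_MPO = −q/2`. -/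
noncomputable def xMPO (q : ℝ) : ℝ := -q / 2

/-- Optimal force ratio for maximum efficiency: `x_Mη = −q/(1 + √(1 − q²))`. -/
noncomputable def xMeta (q : ℝ) : ℝ := -q / (1 + Real.sqrt (1 - q ^ 2))

/-- Optimal force ratio for maximum ecological function: `x_MEF = −3q/4`. -/
noncomputable def xMEF (q : ℝ) : ℝ := -(3 * q) / 4

/-- Optimal force ratio for maximum omega function:
`x_MΩ = −q·(4 − q² + 4√(1 − q²))/(4·(1 + √(1 − q²))²)`. -/
noncomputable def xMOmega (q : ℝ) : ℝ :=
  -(q * (4 - q ^ 2 + 4 * Real.sqrt (1 - q ^ 2))) / (4 * (1 + Real.sqrt (1 - q ^ 2)) ^ 2)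

/-- Optimal force ratio for maximum efficient power:
`x_MPη = −(4 + q² − √(16 − 16q² + q⁴))/(6q)`. -/
noncomputable def xMPeta (q : ℝ) : ℝ :=
  -(4 + q ^ 2 - Real.sqrt (16 - 16 * q ^ 2 + q ^ 4)) / (6 * q)

/-- Reduced dissipation function `Φ(x) = T·L₂₂·X₂²·(x² + 2qx + 1)`. -/
noncomputable def dissipX (T L22 X2 q x : ℝ) : ℝ :=
  T * L22 * X2 ^ 2 * (x ^ 2 + 2 * q * x + 1)

set_option maxHeartbeats 1600000

/-- (Dissipation hierarchy, Eq. 7a) For `2√2/3 < q < 1`, the reduced dissipation function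
evaluated at the six optimal force ratios satisfies
`Φ(x_mdf) < Φ(x_Mη) < Φ(x_MEF) < Φ(x_MΩ) < Φ(x_MPη) < Φ(x_MPO)`. -/
theorem dissipation_hierarchy (T L22 X2 q : ℝ) (hT : 0 < T) (hL22 : 0 < L22)
    (hX2 : X2 ≠ 0) (hq0 : 2 * Real.sqrt 2 / 3 < q) (hq1 : q < 1) :
    dissipX T L22 X2 q (xmdf q) < dissipX T L22 X2 q (xMeta q) ∧
    dissipX T L22 X2 q (xMeta q) < dissipX T L22 X2 q (xMEF q) ∧
    dissipX T L22 X2 q (xMEF q) < dissipX T L22 X2 q (xMOmega q) ∧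
    dissipX T L22 X2 q (xMOmega q) < dissipX T L22 X2 q (xMPeta q) ∧
    dissipX T L22 X2 q (xMPeta q) < dissipX T L22 X2 q (xMPO q) := by
  have hC : 0 < T * L22 * X2 ^ 2 := by positivity
  have hsqrt2 : (0:ℝ) < Real.sqrt 2 := Real.sqrt_pos.2 (by norm_num)
  have hq : 0 < q := lt_trans (by positivity) hq0
  have hq2 : 8/9 < q ^ 2 := by
    have h2 : (Real.sqrt 2) ^ 2 = 2 := Real.sq_sqrt (by norm_num)
    nlinarith [hq0, hsqrt2]
  have hq21 : q ^ 2 < 1 := by nlinarith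
  simp only [dissipX, xmdf, xMeta, xMEF, xMOmega, xMPeta, xMPO]
  set s := Real.sqrt (1 - q ^ 2) with hsdef
  set r := Real.sqrt (16 - 16 * q ^ 2 + q ^ 4) with hrdef
  have hs2 : s ^ 2 = 1 - q ^ 2 := Real.sq_sqrt (by linarith)
  have hs0 : 0 < s := Real.sqrt_pos.2 (by linarith)
  have hs3 : s < 1/3 := by nlinarith
  have hr2 : r ^ 2 = 16 - 16 * q ^ 2 + q ^ 4 := Real.sq_sqrt (by nlinarith)
  have hr0 : 0 < r := Real.sqrt_pos.2 (by nlinarith)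
  have h1s : (0:ℝ) < 1 + s := by linarith
  -- key fact for step 4 : 1 + 6s + s² < 2r
  have hr2' : r ^ 2 = s ^ 4 + 14 * s ^ 2 + 1 := by
    have : q ^ 2 = 1 - s ^ 2 := by linarith
    rw [hr2]; nlinarith [this]
  have hkey : 1 + 6*s + s^2 < 2*r := by
    have hprod : (2*r - (1 + 6*s + s^2)) * (2*r + (1 + 6*s + s^2)) = 3*((1-s)^2)^2 := by
      linear_combination 4 * hr2'
    nlinarith [hprod, sq_nonneg (1 - s), hs0, hr0, sq_nonneg ((1-s)^2)]
  -- key fact for step 5 : r < 4 - 2q²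
  have hr5 : r < 4 - 2*q^2 := by
    have hprod : (4 - 2*q^2 - r) * (4 - 2*q^2 + r) = 3*q^4 := by linear_combination -hr2
    by_contra h
    push_neg at h
    have hle : (4 - 2*q^2 - r) * (4 - 2*q^2 + r) ≤ 0 :=
      mul_nonpos_of_nonpos_of_nonneg (by linarith) (by linarith)
    have h4 : 0 < 3*q^4 := by positivity
    linarith
  -- distances
  have c1 : 0 < q*s/(1+s) := by positivity
  have c2 : q*s/(1+s) < q/4 := by
    rw [div_lt_div_iff₀ h1s (by norm_num)]; nlinarith
  have c3 : q/4 < q*(4*s+4*s^2+q^2)/(4*(1+s)^2) := by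
    rw [div_lt_div_iff₀ (by norm_num) (by positivity)]; nlinarith [mul_pos hq hs0, hs2]
  have c4 : q*(4*s+4*s^2+q^2)/(4*(1+s)^2) < (5*q^2-4+r)/(6*q) := by
    rw [div_lt_div_iff₀ (by positivity) (by positivity)]
    have heq : (5*q^2-4+r) * (4*(1+s)^2) - q*(4*s+4*s^2+q^2)*(6*q)
        = 2*(1+s)^2*(2*r - (1+6*s+s^2)) := by
      linear_combination (8*(1+s)^2 - 6*(s^2 - (1 - q^2))) * hs2
    have hpos := mul_pos (pow_pos h1s 2) (show (0:ℝ) < 2*r - (1+6*s+s^2) by linarith)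
    linarith
  have c5 : (5*q^2-4+r)/(6*q) < q/2 := by
    rw [div_lt_div_iff₀ (by positivity) (by norm_num)]; nlinarith
  -- squared distances
  have d2 : (q*s/(1+s))^2 < (q/4)^2 := pow_lt_pow_left₀ c2 (le_of_lt c1) two_ne_zero
  have d3 : (q/4)^2 < (q*(4*s+4*s^2+q^2)/(4*(1+s)^2))^2 :=
    pow_lt_pow_left₀ c3 (by positivity) two_ne_zero
  have d4 : (q*(4*s+4*s^2+q^2)/(4*(1+s)^2))^2 < ((5*q^2-4+r)/(6*q))^2 :=
    pow_lt_pow_left₀ c4 (le_of_lt (lt_trans (lt_trans c1 c2) c3)) two_ne_zero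
  have d5 : ((5*q^2-4+r)/(6*q))^2 < (q/2)^2 :=
    pow_lt_pow_left₀ c5 (le_of_lt (lt_trans (lt_trans (lt_trans c1 c2) c3) c4)) two_ne_zero
  -- rewrite each f value as (distance)² + (1 - q²)
  have g1 : (-q)^2 + 2*q*(-q) + 1 = (0:ℝ)^2 + (1 - q^2) := by ring
  have g2 : (-q/(1+s))^2 + 2*q*(-q/(1+s)) + 1 = (q*s/(1+s))^2 + (1 - q^2) := by
    field_simp; ring
  have g3 : (-(3*q)/4)^2 + 2*q*(-(3*q)/4) + 1 = (q/4)^2 + (1 - q^2) := by ring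
  have g4 : (-(q * (4 - q ^ 2 + 4 * s)) / (4 * (1 + s) ^ 2))^2
      + 2*q*(-(q * (4 - q ^ 2 + 4 * s)) / (4 * (1 + s) ^ 2)) + 1
      = (q*(4*s+4*s^2+q^2)/(4*(1+s)^2))^2 + (1 - q^2) := by
    field_simp; ring
  have g5 : (-(4 + q ^ 2 - r) / (6 * q))^2 + 2*q*(-(4 + q ^ 2 - r) / (6 * q)) + 1
      = ((5*q^2-4+r)/(6*q))^2 + (1 - q^2) := by
    field_simp; ring
  have g6 : (-q/2)^2 + 2*q*(-q/2) + 1 = (q/2)^2 + (1 - q^2) := by ring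
  have hmul : ∀ a b : ℝ, a < b → T * L22 * X2 ^ 2 * a < T * L22 * X2 ^ 2 * b :=
    fun a b h => mul_lt_mul_of_pos_left h hC
  refine ⟨hmul _ _ ?_, hmul _ _ ?_, hmul _ _ ?_, hmul _ _ ?_, hmul _ _ ?_⟩
  · rw [g1, g2]; nlinarith [c1]
  · rw [g2, g3]; linarith [d2]
  · rw [g3, g4]; linarith [d3]
  · rw [g4, g5]; linarith [d4]
  · rw [g5, g6]; linarith [d5]
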